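/- Let M ⊆ ℝ^{n+1} be a Lebesgue-measurable set whose measure-theoretic boundary ∂M has Lebesgue measure zero. Then the following are equivalent: (i) there exists a measurable function u : ℝ^n → [−∞,+∞] such that M coincides with the subgraph sub u up to a set of Lebesgue measure zero; (ii) M is directed with respect to e_{n+1}. Moreover, in case (ii) one may take u(x̂) := sup{t ∈ ℝ : (x̂,t) ∈ M_μ}. -/

import Mathlib

open MeasureTheory Metric

/-- Approximate density of a set `M` at `x` with respect to radius `ρ`. -/
noncomputable def approxDensity {d : ℕ} (M : Set (EuclideanSpace ℝ (Fin d))) (ρ : ℝ)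
    (x : EuclideanSpace ℝ (Fin d)) : ENNReal :=
  volume (M ∩ ball x ρ) / volume (ball x ρ)

/-- `M` is directed with respect to `v`. -/
def DirectedWrt {d : ℕ} (M : Set (EuclideanSpace ℝ (Fin d)))
    (v : EuclideanSpace ℝ (Fin d)) : Prop :=
  ∀ x : EuclideanSpace ℝ (Fin d), ∀ ρ : ℝ, 0 < ρ →
    Antitone (fun t : ℝ => approxDensity M ρ (x + t • v))

/-- Measure-theoretic interior. -/
def mInterior {d : ℕ} (M : Set (EuclideanSpace ℝ (Fin d))) :
    Set (EuclideanSpace ℝ (Fin d)) :=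
  {x | ∃ ρ > (0 : ℝ), volume (ball x ρ \ M) = 0}

/-- Measure-theoretic exterior. -/
def mExterior {d : ℕ} (M : Set (EuclideanSpace ℝ (Fin d))) :
    Set (EuclideanSpace ℝ (Fin d)) :=
  {x | ∃ ρ > (0 : ℝ), volume (M ∩ ball x ρ) = 0}

/-- Measure-theoretic boundary. -/
def mBoundary {d : ℕ} (M : Set (EuclideanSpace ℝ (Fin d))) :
    Set (EuclideanSpace ℝ (Fin d)) :=
  (mInterior M ∪ mExterior M)ᶜ

/-- The subgraph of an extended-real-valued function on `ℝⁿ`, as a subset of `ℝⁿ⁺¹`. -/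
def subgraph {n : ℕ} (φ : EuclideanSpace ℝ (Fin n) → EReal) :
    Set (EuclideanSpace ℝ (Fin (n + 1))) :=
  {x | (x (Fin.last n) : EReal) < φ (WithLp.toLp 2 (fun i : Fin n => x i.castSucc))}

/-- The point of `ℝⁿ⁺¹` with base point `xhat ∈ ℝⁿ` and last coordinate `t`. -/
def pairPoint {n : ℕ} (xhat : EuclideanSpace ℝ (Fin n)) (t : ℝ) :
    EuclideanSpace ℝ (Fin (n + 1)) :=
  WithLp.toLp 2 (Fin.snoc xhat.ofLp t)

section Aux

variable {n d : ℕ}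

/-! ### Basic facts about `pairPoint` -/

lemma pairPoint_last (xhat : EuclideanSpace ℝ (Fin n)) (t : ℝ) :
    pairPoint xhat t (Fin.last n) = t := by
  simp [pairPoint]

lemma pairPoint_castSucc (xhat : EuclideanSpace ℝ (Fin n)) (t : ℝ) (i : Fin n) :
    pairPoint xhat t i.castSucc = xhat i := by
  simp [pairPoint]

lemma pairPoint_base (xhat : EuclideanSpace ℝ (Fin n)) (t : ℝ) :
    (fun i : Fin n => pairPoint xhat t i.castSucc) = xhat :=
  funext (pairPoint_castSucc xhat t)

lemma mem_subgraph_pairPoint (φ : EuclideanSpace ℝ (Fin n) → EReal)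
    (xhat : EuclideanSpace ℝ (Fin n)) (t : ℝ) :
    pairPoint xhat t ∈ subgraph φ ↔ (t : EReal) < φ xhat := by
  simp only [subgraph, Set.mem_setOf_eq, pairPoint_last, pairPoint_base, WithLp.toLp_ofLp]

lemma add_smul_single_apply_last (y : EuclideanSpace ℝ (Fin (n + 1))) (t : ℝ) :
    (y + t • EuclideanSpace.single (Fin.last n) (1 : ℝ)) (Fin.last n)
      = y (Fin.last n) + t := by
  simp [PiLp.add_apply, PiLp.smul_apply, EuclideanSpace.single_apply]

lemma add_smul_single_apply_castSucc (y : EuclideanSpace ℝ (Fin (n + 1))) (t : ℝ) (i : Fin n) :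
    (y + t • EuclideanSpace.single (Fin.last n) (1 : ℝ)) i.castSucc = y i.castSucc := by
  simp [PiLp.add_apply, PiLp.smul_apply, EuclideanSpace.single_apply,
    (Fin.castSucc_lt_last i).ne]

lemma pairPoint_add (xhat : EuclideanSpace ℝ (Fin n)) (t s : ℝ) :
    pairPoint xhat t + s • EuclideanSpace.single (Fin.last n) (1 : ℝ)
      = pairPoint xhat (t + s) := by
  ext i
  refine Fin.lastCases ?_ ?_ i
  · rw [add_smul_single_apply_last, pairPoint_last, pairPoint_last]
  · intro j
    rw [add_smul_single_apply_castSucc, pairPoint_castSucc, pairPoint_castSucc]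

lemma mem_subgraph_add_smul_single (φ : EuclideanSpace ℝ (Fin n) → EReal)
    (y : EuclideanSpace ℝ (Fin (n + 1))) (t : ℝ) :
    y + t • EuclideanSpace.single (Fin.last n) (1 : ℝ) ∈ subgraph φ ↔
      ((y (Fin.last n) + t : ℝ) : EReal) < φ (WithLp.toLp 2 (fun i : Fin n => y i.castSucc)) := by
  have h2 : (fun i : Fin n =>
      (y + t • EuclideanSpace.single (Fin.last n) (1 : ℝ)) i.castSucc)
      = fun i : Fin n => y i.castSucc :=
    funext fun i => add_smul_single_apply_castSucc y t i
  simp only [subgraph, Set.mem_setOf_eq, add_smul_single_apply_last, h2]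

/-! ### Translation invariance -/

lemma volume_preimage_add (c : EuclideanSpace ℝ (Fin d)) (s : Set (EuclideanSpace ℝ (Fin d))) :
    volume ((fun y => y + c) ⁻¹' s) = volume s := by
  have h1 : volume ((⇑(Homeomorph.addRight c).toMeasurableEquiv) ⁻¹' s)
      = (Measure.map (⇑(Homeomorph.addRight c).toMeasurableEquiv) volume) s :=
    (MeasurableEquiv.map_apply (Homeomorph.addRight c).toMeasurableEquiv s).symm
  have h2 : ⇑(Homeomorph.addRight c).toMeasurableEquiv = fun y => y + c := rfl
  rw [← h2, h1, h2, map_add_right_eq_self]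

lemma preimage_add_ball' (c x : EuclideanSpace ℝ (Fin d)) (ρ : ℝ) :
    (fun y => y + c) ⁻¹' ball (x + c) ρ = ball x ρ := by
  ext y
  simp [mem_ball, dist_add_right]

lemma volume_ball_add (c x : EuclideanSpace ℝ (Fin d)) (ρ : ℝ) :
    volume (ball (x + c) ρ) = volume (ball x ρ) := by
  rw [← volume_preimage_add c (ball (x + c) ρ), preimage_add_ball']

lemma approxDensity_add (A : Set (EuclideanSpace ℝ (Fin d))) (ρ : ℝ)
    (x c : EuclideanSpace ℝ (Fin d)) :
    approxDensity A ρ (x + c)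
      = volume ((fun y => y + c) ⁻¹' A ∩ ball x ρ) / volume (ball x ρ) := by
  unfold approxDensity
  rw [← volume_preimage_add c (A ∩ ball (x + c) ρ), Set.preimage_inter,
    preimage_add_ball', volume_ball_add]

/-! ### Subgraphs are directed -/

lemma directedWrt_subgraph (φ : EuclideanSpace ℝ (Fin n) → EReal) :
    DirectedWrt (subgraph φ) (EuclideanSpace.single (Fin.last n) (1 : ℝ)) := by
  intro x ρ _ s t hst
  simp only
  rw [approxDensity_add, approxDensity_add]
  apply ENNReal.div_le_div_right
  apply measure_mono
  apply Set.inter_subset_inter_left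
  intro y hy
  rw [Set.mem_preimage, mem_subgraph_add_smul_single] at hy ⊢
  refine lt_of_le_of_lt ?_ hy
  exact_mod_cast EReal.coe_le_coe_iff.mpr (by linarith)

lemma directedWrt_congr {A B : Set (EuclideanSpace ℝ (Fin d))}
    (h : volume (symmDiff A B) = 0) {v : EuclideanSpace ℝ (Fin d)}
    (hB : DirectedWrt B v) : DirectedWrt A v := by
  have hAB : A =ᵐ[volume] B := measure_symmDiff_eq_zero_iff.mp h
  have key : ∀ z ρ, approxDensity A ρ z = approxDensity B ρ z := by
    intro z ρ
    unfold approxDensity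
    rw [measure_congr (hAB.inter (Filter.EventuallyEq.refl (ae volume) (ball z ρ)))]
  intro x ρ hρ s t hst
  simp only [key]
  exact hB x ρ hρ hst

/-! ### The measure-theoretic interior and exterior -/

lemma isOpen_mInterior (M : Set (EuclideanSpace ℝ (Fin d))) : IsOpen (mInterior M) := by
  rw [Metric.isOpen_iff]
  rintro x ⟨ρ, hρ, hx⟩
  refine ⟨ρ, hρ, fun y hy => ?_⟩
  rw [mem_ball] at hy
  refine ⟨ρ - dist y x, by linarith, ?_⟩
  refine measure_mono_null (Set.diff_subset_diff_left ?_) hx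
  exact ball_subset_ball' (by linarith)

lemma volume_inter_mExterior_null (M : Set (EuclideanSpace ℝ (Fin d))) :
    volume (M ∩ mExterior M) = 0 := by
  have hch : ∀ x : mExterior M, ∃ ρ > (0 : ℝ), volume (M ∩ ball (x : EuclideanSpace ℝ (Fin d)) ρ) = 0 :=
    fun x => x.2
  choose ρ hρ hnull using hch
  obtain ⟨T, hTc, hT⟩ := TopologicalSpace.isOpen_iUnion_countable
    (fun x : mExterior M => ball (x : EuclideanSpace ℝ (Fin d)) (ρ x)) (fun _ => isOpen_ball)
  have hsub : M ∩ mExterior M ⊆ ⋃ x ∈ T, M ∩ ball (x : EuclideanSpace ℝ (Fin d)) (ρ x) := by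
    intro y hy
    have hmem : y ∈ ⋃ x : mExterior M, ball (x : EuclideanSpace ℝ (Fin d)) (ρ x) :=
      Set.mem_iUnion.mpr ⟨⟨y, hy.2⟩, mem_ball_self (hρ _)⟩
    rw [← hT] at hmem
    obtain ⟨x, hxT, hyx⟩ := Set.mem_iUnion₂.mp hmem
    exact Set.mem_iUnion₂.mpr ⟨x, hxT, hy.1, hyx⟩
  refine measure_mono_null hsub ?_
  exact (measure_biUnion_null_iff hTc).mpr fun x _ => hnull x

lemma volume_mInterior_diff_null (M : Set (EuclideanSpace ℝ (Fin d))) :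
    volume (mInterior M \ M) = 0 := by
  have hch : ∀ x : mInterior M, ∃ ρ > (0 : ℝ), volume (ball (x : EuclideanSpace ℝ (Fin d)) ρ \ M) = 0 :=
    fun x => x.2
  choose ρ hρ hnull using hch
  obtain ⟨T, hTc, hT⟩ := TopologicalSpace.isOpen_iUnion_countable
    (fun x : mInterior M => ball (x : EuclideanSpace ℝ (Fin d)) (ρ x)) (fun _ => isOpen_ball)
  have hsub : mInterior M \ M ⊆ ⋃ x ∈ T, ball (x : EuclideanSpace ℝ (Fin d)) (ρ x) \ M := by
    intro y hy
    have hmem : y ∈ ⋃ x : mInterior M, ball (x : EuclideanSpace ℝ (Fin d)) (ρ x) :=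
      Set.mem_iUnion.mpr ⟨⟨y, hy.1⟩, mem_ball_self (hρ _)⟩
    rw [← hT] at hmem
    obtain ⟨x, hxT, hyx⟩ := Set.mem_iUnion₂.mp hmem
    exact Set.mem_iUnion₂.mpr ⟨x, hxT, hyx, hy.2⟩
  refine measure_mono_null hsub ?_
  exact (measure_biUnion_null_iff hTc).mpr fun x _ => hnull x

lemma volume_symmDiff_mInterior (M : Set (EuclideanSpace ℝ (Fin d)))
    (hbdry : volume (mBoundary M) = 0) :
    volume (symmDiff M (mInterior M)) = 0 := by
  have hsub : symmDiff M (mInterior M) ⊆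
      (M ∩ mExterior M) ∪ (mInterior M \ M) ∪ mBoundary M := by
    intro y hy
    rcases Set.mem_symmDiff.mp hy with ⟨hyM, hyI⟩ | ⟨hyI, hyM⟩
    · by_cases he : y ∈ mExterior M
      · exact Or.inl (Or.inl ⟨hyM, he⟩)
      · exact Or.inr fun hc => (hc.elim hyI he)
    · exact Or.inl (Or.inr ⟨hyI, hyM⟩)
  refine measure_mono_null hsub ?_
  refine measure_union_null (measure_union_null ?_ ?_) hbdry
  · exact volume_inter_mExterior_null M
  · exact volume_mInterior_diff_null M

/-! ### Directedness gives downward-closed vertical slices of the interior -/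

lemma approxDensity_le_one (A : Set (EuclideanSpace ℝ (Fin d))) {ρ : ℝ} (hρ : 0 < ρ)
    (x : EuclideanSpace ℝ (Fin d)) : approxDensity A ρ x ≤ 1 := by
  unfold approxDensity
  calc volume (A ∩ ball x ρ) / volume (ball x ρ)
      ≤ volume (ball x ρ) / volume (ball x ρ) :=
        ENNReal.div_le_div_right (measure_mono Set.inter_subset_right) _
    _ = 1 := ENNReal.div_self (measure_ball_pos _ _ hρ).ne' measure_ball_lt_top.ne

lemma approxDensity_eq_one_iff {A : Set (EuclideanSpace ℝ (Fin d))} (hA : MeasurableSet A)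
    {ρ : ℝ} (hρ : 0 < ρ) (x : EuclideanSpace ℝ (Fin d)) :
    approxDensity A ρ x = 1 ↔ volume (ball x ρ \ A) = 0 := by
  unfold approxDensity
  rw [ENNReal.div_eq_one_iff (measure_ball_pos _ _ hρ).ne' measure_ball_lt_top.ne]
  have hsplit := measure_inter_add_diff (μ := volume) (ball x ρ) hA
  constructor
  · intro h
    rw [Set.inter_comm] at h
    rw [h] at hsplit
    exact (ENNReal.add_right_inj measure_ball_lt_top.ne).mp
      (by rw [add_zero]; exact hsplit)
  · intro h
    rw [h, add_zero] at hsplit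
    rw [Set.inter_comm]
    exact hsplit

lemma slice_antitone {M : Set (EuclideanSpace ℝ (Fin (n + 1)))} (hM : MeasurableSet M)
    (hdir : DirectedWrt M (EuclideanSpace.single (Fin.last n) (1 : ℝ)))
    (xhat : EuclideanSpace ℝ (Fin n)) {s t : ℝ} (hst : s ≤ t)
    (ht : pairPoint xhat t ∈ mInterior M) : pairPoint xhat s ∈ mInterior M := by
  obtain ⟨ρ, hρ, hnull⟩ := ht
  refine ⟨ρ, hρ, ?_⟩
  rw [← approxDensity_eq_one_iff hM hρ] at hnull ⊢
  have hanti := hdir (pairPoint xhat 0) ρ hρ hst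
  simp only [pairPoint_add, zero_add] at hanti
  exact le_antisymm (approxDensity_le_one M hρ _) (hnull ▸ hanti)

/-! ### The canonical function -/

/-- The canonical function whose subgraph recovers a directed set. -/
noncomputable def canonU {n : ℕ} (M : Set (EuclideanSpace ℝ (Fin (n + 1))))
    (xhat : EuclideanSpace ℝ (Fin n)) : EReal :=
  sSup ((fun t : ℝ => (t : EReal)) '' {t : ℝ | pairPoint xhat t ∈ mInterior M})

lemma le_canonU {M : Set (EuclideanSpace ℝ (Fin (n + 1)))}
    {xhat : EuclideanSpace ℝ (Fin n)} {t : ℝ} (h : pairPoint xhat t ∈ mInterior M) :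
    (t : EReal) ≤ canonU M xhat :=
  le_sSup ⟨t, h, rfl⟩

lemma lt_canonU_iff {M : Set (EuclideanSpace ℝ (Fin (n + 1)))}
    {xhat : EuclideanSpace ℝ (Fin n)} {a : EReal} :
    a < canonU M xhat ↔ ∃ t : ℝ, pairPoint xhat t ∈ mInterior M ∧ a < (t : EReal) := by
  unfold canonU
  rw [lt_sSup_iff]
  constructor
  · rintro ⟨b, ⟨t, ht, rfl⟩, hab⟩
    exact ⟨t, ht, hab⟩
  · rintro ⟨t, ht, hat⟩
    exact ⟨(t : EReal), ⟨t, ht, rfl⟩, hat⟩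

lemma dist_pairPoint (xhat yhat : EuclideanSpace ℝ (Fin n)) (t : ℝ) :
    dist (pairPoint xhat t) (pairPoint yhat t) = dist xhat yhat := by
  rw [EuclideanSpace.dist_eq, EuclideanSpace.dist_eq]
  congr 1
  rw [Fin.sum_univ_castSucc]
  simp [pairPoint_last, pairPoint_castSucc]

lemma measurable_canonU (M : Set (EuclideanSpace ℝ (Fin (n + 1)))) :
    Measurable (canonU M) := by
  apply measurable_of_Ioi
  intro a
  have hopen : IsOpen (canonU M ⁻¹' Set.Ioi a) := by
    rw [Metric.isOpen_iff]
    intro xhat hx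
    rw [Set.mem_preimage, Set.mem_Ioi] at hx
    obtain ⟨t, ht, hab⟩ := lt_canonU_iff.mp hx
    obtain ⟨ε, hε, hball⟩ := Metric.isOpen_iff.mp (isOpen_mInterior M) _ ht
    refine ⟨ε, hε, fun yhat hy => ?_⟩
    have hdist : dist (pairPoint yhat t) (pairPoint xhat t) = dist yhat xhat :=
      dist_pairPoint yhat xhat t
    have hmem : pairPoint yhat t ∈ mInterior M := by
      apply hball
      rw [mem_ball, hdist]
      exact hy
    rw [Set.mem_preimage, Set.mem_Ioi]
    exact lt_of_lt_of_le hab (le_canonU hmem)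
  exact hopen.measurableSet

lemma slice_symmDiff_subsingleton {M : Set (EuclideanSpace ℝ (Fin (n + 1)))}
    (hM : MeasurableSet M)
    (hdir : DirectedWrt M (EuclideanSpace.single (Fin.last n) (1 : ℝ)))
    (xhat : EuclideanSpace ℝ (Fin n)) :
    {t : ℝ | pairPoint xhat t ∈ symmDiff (mInterior M) (subgraph (canonU M))}.Subsingleton := by
  have key : ∀ t, pairPoint xhat t ∈ symmDiff (mInterior M) (subgraph (canonU M)) →
      (t : EReal) = canonU M xhat := by
    intro t ht
    rcases Set.mem_symmDiff.mp ht with ⟨hI, hS⟩ | ⟨hS, hI⟩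
    · rw [mem_subgraph_pairPoint] at hS
      exact le_antisymm (le_canonU hI) (not_lt.mp hS)
    · rw [mem_subgraph_pairPoint] at hS
      exfalso
      obtain ⟨r, hr, htb⟩ := lt_canonU_iff.mp hS
      have : t < r := EReal.coe_lt_coe_iff.mp htb
      exact hI (slice_antitone hM hdir xhat this.le hr)
  intro a ha b hb
  have : ((a : ℝ) : EReal) = ((b : ℝ) : EReal) := (key a ha).trans (key b hb).symm
  exact_mod_cast this

/-! ### The splitting measurable equivalence and the Fubini argument -/

/-- The measure-preserving identification of `ℝⁿ⁺¹` with `(Fin n → ℝ) × ℝ`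
splitting off the last coordinate. -/
noncomputable def splitE (n : ℕ) :
    EuclideanSpace ℝ (Fin (n + 1)) ≃ᵐ ((Fin n → ℝ) × ℝ) :=
  (MeasurableEquiv.toLp 2 (Fin (n + 1) → ℝ)).symm.trans
    ((MeasurableEquiv.piFinSuccAbove (fun _ => ℝ) (Fin.last n)).trans
      MeasurableEquiv.prodComm)

lemma splitE_apply (y : EuclideanSpace ℝ (Fin (n + 1))) :
    splitE n y = (fun i : Fin n => y i.castSucc, y (Fin.last n)) := by
  refine Prod.ext ?_ rfl
  funext i
  show y ((Fin.last n).succAbove i) = y i.castSucc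
  rw [Fin.succAbove_last]

lemma measurePreserving_splitE : MeasurePreserving (splitE n) volume volume := by
  have h1 := EuclideanSpace.volume_preserving_symm_measurableEquiv_toLp (Fin (n + 1))
  have h2 := volume_preserving_piFinSuccAbove (fun _ : Fin (n + 1) => ℝ) (Fin.last n)
  have h3 : MeasurePreserving (MeasurableEquiv.prodComm : ℝ × (Fin n → ℝ) ≃ᵐ _)
      volume volume := by
    rw [Measure.volume_eq_prod, Measure.volume_eq_prod]
    exact Measure.measurePreserving_swap
  exact (h3.comp h2).comp h1

lemma volume_eq_zero_of_slices {N : Set (EuclideanSpace ℝ (Fin (n + 1)))}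
    (hN : MeasurableSet N)
    (h : ∀ xhat : EuclideanSpace ℝ (Fin n), {t : ℝ | pairPoint xhat t ∈ N}.Subsingleton) :
    volume N = 0 := by
  have hfor : ∀ (xhat : EuclideanSpace ℝ (Fin n)) (t : ℝ),
      splitE n (pairPoint xhat t) = (xhat.ofLp, t) := by
    intro xhat t
    rw [splitE_apply, pairPoint_base, pairPoint_last]
  have hsymm : ∀ (xhat : EuclideanSpace ℝ (Fin n)) (t : ℝ),
      (splitE n).symm (xhat.ofLp, t) = pairPoint xhat t := by
    intro xhat t
    rw [← hfor xhat t, MeasurableEquiv.symm_apply_apply]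
  have hvol : volume N = (volume : Measure ((Fin n → ℝ) × ℝ)) ((splitE n).symm ⁻¹' N) := by
    have hmap : Measure.map (⇑(splitE n)) volume = volume :=
      (measurePreserving_splitE (n := n)).map_eq
    rw [← hmap, MeasurableEquiv.map_apply]
    congr 1
    ext y
    simp [MeasurableEquiv.symm_apply_apply]
  rw [hvol, Measure.volume_eq_prod,
    Measure.measure_prod_null ((splitE n).symm.measurable hN)]
  apply Filter.Eventually.of_forall
  intro xhat
  have hslice : Prod.mk xhat ⁻¹' ((splitE n).symm ⁻¹' N) = {t : ℝ | pairPoint (WithLp.toLp 2 xhat) t ∈ N} := by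
    ext t
    show (splitE n).symm (xhat, t) ∈ N ↔ pairPoint (WithLp.toLp 2 xhat) t ∈ N
    rw [← hsymm]
  show volume (Prod.mk xhat ⁻¹' ((splitE n).symm ⁻¹' N)) = (0 : (Fin n → ℝ) → ENNReal) xhat
  rw [hslice]
  exact (h (WithLp.toLp 2 xhat)).measure_zero volume

/-! ### Measurability of subgraphs -/

lemma measurable_proj_castSucc :
    Measurable (fun x : EuclideanSpace ℝ (Fin (n + 1)) =>
      WithLp.toLp 2 (fun i : Fin n => x i.castSucc)) := by
  have : (fun x : EuclideanSpace ℝ (Fin (n + 1)) =>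
      WithLp.toLp 2 (fun i : Fin n => x i.castSucc))
      = (MeasurableEquiv.toLp 2 (Fin n → ℝ)) ∘
        (fun x : Fin (n + 1) → ℝ => fun i : Fin n => x i.castSucc) ∘
        (MeasurableEquiv.toLp 2 (Fin (n + 1) → ℝ)).symm := rfl
  rw [this]
  exact (MeasurableEquiv.toLp 2 (Fin n → ℝ)).measurable.comp
    ((measurable_pi_lambda
        (fun (x : Fin (n + 1) → ℝ) (i : Fin n) => x i.castSucc)
        (fun i => measurable_pi_apply i.castSucc)).comp
      (MeasurableEquiv.toLp 2 (Fin (n + 1) → ℝ)).symm.measurable)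

lemma measurableSet_subgraph {φ : EuclideanSpace ℝ (Fin n) → EReal} (hφ : Measurable φ) :
    MeasurableSet (subgraph φ) := by
  apply measurableSet_lt
  · exact measurable_coe_real_ereal.comp (EuclideanSpace.proj (Fin.last n)).continuous.measurable
  · exact hφ.comp measurable_proj_castSucc

/-! ### Main a.e. equality -/

lemma volume_symmDiff_canonU {M : Set (EuclideanSpace ℝ (Fin (n + 1)))}
    (hM : MeasurableSet M) (hbdry : volume (mBoundary M) = 0)
    (hdir : DirectedWrt M (EuclideanSpace.single (Fin.last n) (1 : ℝ))) :
    volume (symmDiff M (subgraph (canonU M))) = 0 := by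
  have h1 : volume (symmDiff M (mInterior M)) = 0 := volume_symmDiff_mInterior M hbdry
  have h2 : volume (symmDiff (mInterior M) (subgraph (canonU M))) = 0 := by
    apply volume_eq_zero_of_slices
    · exact ((isOpen_mInterior M).measurableSet).symmDiff
        (measurableSet_subgraph (measurable_canonU M))
    · exact fun xhat => slice_symmDiff_subsingleton hM hdir xhat
  have htri : symmDiff M (subgraph (canonU M)) ⊆
      symmDiff M (mInterior M) ∪ symmDiff (mInterior M) (subgraph (canonU M)) :=
    symmDiff_triangle M (mInterior M) (subgraph (canonU M))
  exact measure_mono_null htri (measure_union_null h1 h2)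

end Aux

theorem subgraph_iff_directed {n : ℕ}
    (M : Set (EuclideanSpace ℝ (Fin (n + 1)))) (hM : MeasurableSet M)
    (hbdry : volume (mBoundary M) = 0) :
    ((∃ u : EuclideanSpace ℝ (Fin n) → EReal,
        Measurable u ∧ volume (symmDiff M (subgraph u)) = 0) ↔
      DirectedWrt M (EuclideanSpace.single (Fin.last n) 1)) ∧
    (DirectedWrt M (EuclideanSpace.single (Fin.last n) 1) →
      Measurable (fun xhat : EuclideanSpace ℝ (Fin n) =>
        sSup ((fun t : ℝ => (t : EReal)) '' {t : ℝ | pairPoint xhat t ∈ mInterior M})) ∧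
      volume (symmDiff M (subgraph (fun xhat =>
        sSup ((fun t : ℝ => (t : EReal)) '' {t : ℝ | pairPoint xhat t ∈ mInterior M})))) = 0) := by
  constructor
  · constructor
    · rintro ⟨u, _, hnull⟩
      exact directedWrt_congr hnull (directedWrt_subgraph u)
    · intro hdir
      exact ⟨canonU M, measurable_canonU M, volume_symmDiff_canonU hM hbdry hdir⟩
  · intro hdir
    exact ⟨measurable_canonU M, volume_symmDiff_canonU hM hbdry hdir⟩
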